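/- arXiv:1704.03434 — 2 statements merged into one kernel-verified Lean document; each statement's English description precedes it below -/
import Mathlib

section
/- The generalized continued fraction K_{n=1}^∞ (1/(2n))/1 (partial numerators b_n = 1/(2n), partial denominators a_n = 1) converges to √(eπ/2)·erf(1/√2) − 1. -/
open Real Filter

/-- Finite continued fraction approximant of depth `N`:
`cf b a N = b 1 / (a 1 + b 2 / (a 2 + ... + b N / a N))`. -/
noncomputable def cf (b a : ℕ → ℝ) (N : ℕ) : ℝ :=
  (List.range N).foldr (fun i acc => b (i + 1) / (a (i + 1) + acc)) 0

/-- The error function `erf x = (2/√π) ∫_0^x exp (-t²) dt`. -/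
noncomputable def erf (x : ℝ) : ℝ :=
  (2 / Real.sqrt Real.pi) * ∫ t in (0:ℝ)..x, Real.exp (-t ^ 2)

/-! ### Auxiliary sequences -/

/-- `hh N = ∫_0^1 (1-x²)^N e^{(1-x²)/2} dx`. -/
noncomputable def hh (N : ℕ) : ℝ :=
  ∫ x in (0:ℝ)..1, (1 - x^2)^N * Real.exp ((1 - x^2)/2)

noncomputable def pp : ℕ → ℝ
  | 0 => 0
  | 1 => 1
  | (n+2) => (2*(n:ℝ)+4) * pp (n+1) + (2*(n:ℝ)+2) * pp n

noncomputable def qq : ℕ → ℝ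
  | 0 => 1
  | 1 => 2
  | (n+2) => (2*(n:ℝ)+4) * qq (n+1) + (2*(n:ℝ)+2) * qq n

lemma cont_aux (M : ℕ) : Continuous (fun x : ℝ => (1-x^2)^M * Real.exp ((1-x^2)/2)) := by
  have c1 : Continuous fun x : ℝ => 1 - x^2 := by continuity
  exact (c1.pow M).mul ((c1.div_const 2).rexp)

lemma hh_one : hh 1 = 1 := by
  have key : ∀ x ∈ Set.uIcc (0:ℝ) 1,
      HasDerivAt (fun y : ℝ => y * Real.exp ((1-y^2)/2))
        ((1-x^2)^1 * Real.exp ((1-x^2)/2)) x := by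
    intro x _
    have hu : HasDerivAt (fun y : ℝ => 1 - y^2) (-(2*x)) x := by
      simpa using ((hasDerivAt_pow 2 x).const_sub 1)
    have he : HasDerivAt (fun y : ℝ => Real.exp ((1-y^2)/2))
        (Real.exp ((1-x^2)/2) * (-(2*x)/2)) x := (hu.div_const 2).exp
    have := (hasDerivAt_id x).fun_mul he
    refine this.congr_deriv ?_
    simp only [id_eq]
    ring
  have hint : IntervalIntegrable (fun x : ℝ => (1-x^2)^1 * Real.exp ((1-x^2)/2))
      MeasureTheory.volume 0 1 := (cont_aux 1).intervalIntegrable 0 1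
  have heq := intervalIntegral.integral_eq_sub_of_hasDerivAt key hint
  have : hh 1 = (fun y : ℝ => y * Real.exp ((1-y^2)/2)) 1
      - (fun y : ℝ => y * Real.exp ((1-y^2)/2)) 0 := heq
  rw [this]
  norm_num

lemma hh_rec (N : ℕ) : hh (N+2) = (2*(N:ℝ)+2) * (hh N - hh (N+1)) := by
  have key : ∀ x ∈ Set.uIcc (0:ℝ) 1,
      HasDerivAt (fun y : ℝ => y * (1-y^2)^(N+1) * Real.exp ((1-y^2)/2))
        (-(2*(N:ℝ)+2) * ((1-x^2)^N * Real.exp ((1-x^2)/2))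
          + (2*(N:ℝ)+2) * ((1-x^2)^(N+1) * Real.exp ((1-x^2)/2))
          + (1-x^2)^(N+2) * Real.exp ((1-x^2)/2)) x := by
    intro x _
    have hu : HasDerivAt (fun y : ℝ => 1 - y^2) (-(2*x)) x := by
      simpa using ((hasDerivAt_pow 2 x).const_sub 1)
    have hp : HasDerivAt (fun y : ℝ => (1-y^2)^(N+1))
        (((N+1 : ℕ) : ℝ) * (1-x^2)^N * (-(2*x))) x := by
      simpa using hu.fun_pow (N+1)
    have he : HasDerivAt (fun y : ℝ => Real.exp ((1-y^2)/2))
        (Real.exp ((1-x^2)/2) * (-(2*x)/2)) x := (hu.div_const 2).exp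
    have := ((hasDerivAt_id x).fun_mul hp).fun_mul he
    refine this.congr_deriv ?_
    simp only [id_eq]
    push_cast
    ring
  have hi : ∀ M : ℕ, IntervalIntegrable (fun x : ℝ => (1-x^2)^M * Real.exp ((1-x^2)/2))
      MeasureTheory.volume 0 1 := fun M => (cont_aux M).intervalIntegrable 0 1
  have hint : IntervalIntegrable (fun x : ℝ =>
      -(2*(N:ℝ)+2) * ((1-x^2)^N * Real.exp ((1-x^2)/2))
        + (2*(N:ℝ)+2) * ((1-x^2)^(N+1) * Real.exp ((1-x^2)/2))
        + (1-x^2)^(N+2) * Real.exp ((1-x^2)/2)) MeasureTheory.volume 0 1 :=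
    (((hi N).const_mul _).add ((hi (N+1)).const_mul _)).add (hi (N+2))
  have heq := intervalIntegral.integral_eq_sub_of_hasDerivAt key hint
  have hzero : (fun y : ℝ => y * (1-y^2)^(N+1) * Real.exp ((1-y^2)/2)) 1
      - (fun y : ℝ => y * (1-y^2)^(N+1) * Real.exp ((1-y^2)/2)) 0 = 0 := by
    norm_num
  rw [hzero] at heq
  rw [intervalIntegral.integral_add (((hi N).const_mul _).add ((hi (N+1)).const_mul _)) (hi (N+2)),
      intervalIntegral.integral_add ((hi N).const_mul _) ((hi (N+1)).const_mul _),
      intervalIntegral.integral_const_mul, intervalIntegral.integral_const_mul] at heq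
  have e0 : (∫ x in (0:ℝ)..1, (1-x^2)^N * Real.exp ((1-x^2)/2)) = hh N := rfl
  have e1 : (∫ x in (0:ℝ)..1, (1-x^2)^(N+1) * Real.exp ((1-x^2)/2)) = hh (N+1) := rfl
  have e2 : (∫ x in (0:ℝ)..1, (1-x^2)^(N+2) * Real.exp ((1-x^2)/2)) = hh (N+2) := rfl
  rw [e0, e1, e2] at heq
  linarith

lemma hh_bound (N : ℕ) : |hh N| ≤ 2 := by
  have hexp2 : Real.exp ((1:ℝ)/2) ≤ 2 := by
    rw [Real.exp_half]
    have h4 : Real.sqrt (Real.exp 1) ≤ Real.sqrt 4 :=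
      Real.sqrt_le_sqrt (by nlinarith [Real.exp_one_lt_d9])
    have : Real.sqrt (4:ℝ) = 2 := by
      rw [show (4:ℝ) = 2^2 by norm_num, Real.sqrt_sq (by norm_num : (0:ℝ) ≤ 2)]
    linarith
  have hb : ∀ x ∈ Set.uIoc (0:ℝ) 1, ‖(1-x^2)^N * Real.exp ((1-x^2)/2)‖ ≤ 2 := by
    intro x hx
    rw [Set.uIoc_of_le (by norm_num : (0:ℝ) ≤ 1)] at hx
    obtain ⟨hx0, hx1⟩ := hx
    have h0 : (0:ℝ) ≤ 1 - x^2 := by nlinarith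
    have h1 : 1 - x^2 ≤ 1 := by nlinarith
    have hpow : (1-x^2)^N ≤ 1 := pow_le_one₀ h0 h1
    have hexp : Real.exp ((1-x^2)/2) ≤ Real.exp ((1:ℝ)/2) :=
      Real.exp_le_exp.mpr (by linarith)
    have hpos : (0:ℝ) ≤ (1-x^2)^N * Real.exp ((1-x^2)/2) :=
      mul_nonneg (pow_nonneg h0 N) (Real.exp_pos _).le
    rw [Real.norm_eq_abs, abs_of_nonneg hpos]
    calc (1-x^2)^N * Real.exp ((1-x^2)/2) ≤ 1 * Real.exp ((1:ℝ)/2) :=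
          mul_le_mul hpow hexp (Real.exp_pos _).le (by norm_num)
      _ ≤ 2 := by linarith
  have := intervalIntegral.norm_integral_le_of_norm_le_const hb
  simpa [hh] using this

lemma qq_ge : ∀ n, (2:ℝ)^n ≤ qq n := by
  intro n
  induction n using Nat.twoStepInduction with
  | zero => simp [qq]
  | one => norm_num [qq]
  | more n ih1 ih2 =>
    have h1 : (0:ℝ) < 2^n := by positivity
    have h2 : (0:ℝ) < 2^(n+1) := by positivity
    show (2:ℝ)^(n+2) ≤ (2*(n:ℝ)+4) * qq (n+1) + (2*(n:ℝ)+2) * qq n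
    have hn : (0:ℝ) ≤ (n:ℝ) := Nat.cast_nonneg n
    have e1 : (2*(n:ℝ)+2) * qq n ≥ 0 := mul_nonneg (by linarith) (by linarith)
    have e2 : (2*(n:ℝ)+4) * qq (n+1) ≥ 2 * 2^(n+1) := by nlinarith
    calc (2:ℝ)^(n+2) = 2 * 2^(n+1) := by ring
      _ ≤ (2*(n:ℝ)+4) * qq (n+1) + (2*(n:ℝ)+2) * qq n := by linarith

lemma qq_pos (n : ℕ) : (0:ℝ) < qq n := lt_of_lt_of_le (by positivity) (qq_ge n)

/-- The key identity. -/
lemma key_id : ∀ N, (-1:ℝ)^N * (qq N * (hh 0 - hh 1) - pp N) = hh N - hh (N+1) := by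
  intro N
  induction N using Nat.twoStepInduction with
  | zero => simp [qq, pp]
  | one =>
    have h2 := hh_rec 0
    have h1 := hh_one
    norm_num at h2
    show (-1:ℝ)^1 * (qq 1 * (hh 0 - hh 1) - pp 1) = hh 1 - hh 2
    simp only [qq, pp, pow_one]
    linarith
  | more n ih1 ih2 =>
    have hrec1 := hh_rec n
    have hrec2 := hh_rec (n+1)
    push_cast at hrec1 hrec2
    have hq : qq (n+2) = (2*(n:ℝ)+4) * qq (n+1) + (2*(n:ℝ)+2) * qq n := rfl
    have hp : pp (n+2) = (2*(n:ℝ)+4) * pp (n+1) + (2*(n:ℝ)+2) * pp n := rfl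
    have hpow1 : (-1:ℝ)^(n+1) = (-1)^n * (-1) := by rw [pow_succ]
    have hpow2 : (-1:ℝ)^(n+2) = (-1)^n := by rw [pow_succ, pow_succ]; ring
    rw [hpow1] at ih2
    rw [hpow2, hq, hp]
    linear_combination (2*(n:ℝ)+2) * ih1 - (2*(n:ℝ)+4) * ih2 - hrec1 + hrec2

/-- folding with an arbitrary tail. -/
lemma foldr_eq (N : ℕ) : ∀ x : ℝ, 0 ≤ x →
    (List.range (N+1)).foldr
      (fun (i : ℕ) (acc : ℝ) => 1 / (2 * ((i+1 : ℕ) : ℝ)) / (1 + acc)) x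
      = (pp (N+1) + (2*(N:ℝ)+2) * pp N * x) / (qq (N+1) + (2*(N:ℝ)+2) * qq N * x) := by
  induction N with
  | zero =>
    intro x hx
    have h1x : (0:ℝ) < 1 + x := by linarith
    simp only [List.range_succ, List.range_zero, List.nil_append, List.foldr_cons,
      List.foldr_nil, pp, qq]
    push_cast
    field_simp [h1x.ne']
    ring
  | succ n ih =>
    intro x hx
    have h1x : (0:ℝ) < 1 + x := by linarith
    rw [List.range_succ, List.foldr_append, List.foldr_cons, List.foldr_nil]
    have harg : (0:ℝ) ≤ 1 / (2 * ((n+1+1 : ℕ) : ℝ)) / (1 + x) := by positivity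
    rw [ih (1 / (2 * ((n+1+1 : ℕ) : ℝ)) / (1 + x)) harg]
    have hn : (0:ℝ) ≤ (n:ℝ) := Nat.cast_nonneg n
    have hq1 := qq_pos n
    have hq2 := qq_pos (n+1)
    have hq3 := qq_pos (n+1+1)
    have hd1 : (0:ℝ) < qq (n+1) + (2*(n:ℝ)+2) * qq n * (1 / (2 * ((n+1+1 : ℕ) : ℝ)) / (1 + x)) := by
      have : (0:ℝ) ≤ (2*(n:ℝ)+2) * qq n * (1 / (2 * ((n+1+1 : ℕ) : ℝ)) / (1 + x)) := by positivity
      linarith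
    have hd2 : (0:ℝ) < qq (n+1+1) + (2*((n+1:ℕ):ℝ)+2) * qq (n+1) * x := by
      have : (0:ℝ) ≤ (2*((n+1:ℕ):ℝ)+2) * qq (n+1) * x := by positivity
      linarith
    rw [div_eq_div_iff hd1.ne' hd2.ne']
    have hq : qq (n+1+1) = (2*(n:ℝ)+4) * qq (n+1) + (2*(n:ℝ)+2) * qq n := rfl
    have hp : pp (n+1+1) = (2*(n:ℝ)+4) * pp (n+1) + (2*(n:ℝ)+2) * pp n := rfl
    rw [hq, hp]
    push_cast
    field_simp
    ring

lemma cf_eq (N : ℕ) :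
    cf (fun n => 1 / (2 * (n : ℝ))) (fun _ => 1) N = pp N / qq N := by
  cases N with
  | zero =>
    show (0:ℝ) = pp 0 / qq 0
    simp [pp, qq]
  | succ n =>
    have h := foldr_eq n 0 le_rfl
    rw [mul_zero, add_zero, mul_zero, add_zero] at h
    exact h

lemma sqrt_aux : Real.exp ((1:ℝ)/2) * Real.sqrt 2
    = Real.sqrt (Real.exp 1 * Real.pi / 2) * (2 / Real.sqrt Real.pi) := by
  have h2 : Real.sqrt 2 * Real.sqrt 2 = 2 := Real.mul_self_sqrt (by norm_num)
  have h2pos : (0:ℝ) < Real.sqrt 2 := Real.sqrt_pos.mpr (by norm_num)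
  have hppos : (0:ℝ) < Real.sqrt Real.pi := Real.sqrt_pos.mpr Real.pi_pos
  have hpp : Real.sqrt Real.pi * Real.sqrt Real.pi = Real.pi :=
    Real.mul_self_sqrt Real.pi_pos.le
  have hmul : Real.sqrt (Real.exp 1 * Real.pi / 2) * Real.sqrt 2
      = Real.sqrt (Real.exp 1) * Real.sqrt Real.pi := by
    rw [← Real.sqrt_mul (by positivity) 2, ← Real.sqrt_mul (Real.exp_pos 1).le]
    congr 1
    ring
  have key2 : Real.sqrt (Real.exp 1 * Real.pi / 2) * 2
      = Real.sqrt (Real.exp 1) * Real.sqrt Real.pi * Real.sqrt 2 := by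
    calc Real.sqrt (Real.exp 1 * Real.pi / 2) * 2
        = Real.sqrt (Real.exp 1 * Real.pi / 2) * (Real.sqrt 2 * Real.sqrt 2) := by rw [h2]
      _ = (Real.sqrt (Real.exp 1 * Real.pi / 2) * Real.sqrt 2) * Real.sqrt 2 := by ring
      _ = Real.sqrt (Real.exp 1) * Real.sqrt Real.pi * Real.sqrt 2 := by rw [hmul]
  rw [Real.exp_half]
  symm
  calc Real.sqrt (Real.exp 1 * Real.pi / 2) * (2 / Real.sqrt Real.pi)
      = (Real.sqrt (Real.exp 1 * Real.pi / 2) * 2) / Real.sqrt Real.pi := by ring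
    _ = (Real.sqrt (Real.exp 1) * Real.sqrt Real.pi * Real.sqrt 2) / Real.sqrt Real.pi := by
        rw [key2]
    _ = Real.sqrt (Real.exp 1) * Real.sqrt 2 := by
        field_simp

/-- value of hh 0 -/
lemma hh_zero : hh 0 = Real.sqrt (Real.exp 1 * Real.pi / 2) * erf (1 / Real.sqrt 2) := by
  have step1 : hh 0 = Real.exp (1/2) * ∫ x in (0:ℝ)..1, Real.exp (-x^2/2) := by
    rw [hh, ← intervalIntegral.integral_const_mul]
    apply intervalIntegral.integral_congr
    intro x _
    simp only [pow_zero, one_mul, ← Real.exp_add]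
    congr 1
    ring
  have step2 : (∫ x in (0:ℝ)..1, Real.exp (-x^2/2))
      = Real.sqrt 2 * ∫ t in (0:ℝ)..(1 / Real.sqrt 2), Real.exp (-t^2) := by
    have hc : ((Real.sqrt 2)⁻¹ : ℝ) ≠ 0 := by
      have : (0:ℝ) < Real.sqrt 2 := Real.sqrt_pos.mpr (by norm_num)
      positivity
    have hint := intervalIntegral.integral_comp_mul_right
      (a := (0:ℝ)) (b := 1) (c := (Real.sqrt 2)⁻¹) (fun t : ℝ => Real.exp (-t^2)) hc
    have heq : ∀ x : ℝ, Real.exp (-(x * (Real.sqrt 2)⁻¹)^2) = Real.exp (-x^2/2) := by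
      intro x
      congr 1
      have hs : (Real.sqrt 2)^2 = 2 := Real.sq_sqrt (by norm_num)
      rw [mul_pow, show ((Real.sqrt 2)⁻¹)^2 = ((Real.sqrt 2)^2)⁻¹ by rw [inv_pow], hs]
      ring
    simp only [heq] at hint
    rw [hint]
    have : (0:ℝ) < Real.sqrt 2 := Real.sqrt_pos.mpr (by norm_num)
    rw [smul_eq_mul, inv_inv, zero_mul, one_mul, one_div]
  rw [step1, step2, erf]
  linear_combination (∫ t in (0:ℝ)..(1 / Real.sqrt 2), Real.exp (-t^2)) * sqrt_aux

theorem cf_one_over_two_n :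
    Tendsto (cf (fun n => 1 / (2 * (n : ℝ))) (fun _ => 1)) atTop
      (nhds (Real.sqrt (Real.exp 1 * Real.pi / 2) * erf (1 / Real.sqrt 2) - 1)) := by
  have hval : Real.sqrt (Real.exp 1 * Real.pi / 2) * erf (1 / Real.sqrt 2) - 1 = hh 0 - hh 1 := by
    rw [hh_zero, hh_one]
  rw [hval, tendsto_iff_dist_tendsto_zero]
  apply squeeze_zero (g := fun N => 4 * (1/2:ℝ)^N) (fun n => dist_nonneg)
  · intro N
    rw [Real.dist_eq, cf_eq]
    have hq0 : (0:ℝ) < qq N := qq_pos N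
    have hqg : (2:ℝ)^N ≤ qq N := qq_ge N
    have h2N : (0:ℝ) < (2:ℝ)^N := by positivity
    have hk := key_id N
    have hX : qq N * (hh 0 - hh 1) - pp N = (-1:ℝ)^N * (hh N - hh (N+1)) := by
      have hpow : ((-1:ℝ)^N) * ((-1:ℝ)^N) = 1 := by
        rw [← pow_add]
        exact Even.neg_one_pow ⟨N, rfl⟩
      linear_combination ((-1:ℝ)^N) * hk - (qq N * (hh 0 - hh 1) - pp N) * hpow
    have hdiff : pp N / qq N - (hh 0 - hh 1) = -((-1:ℝ)^N * (hh N - hh (N+1))) / qq N := by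
      rw [← hX]
      field_simp
      ring
    rw [hdiff, abs_div, abs_neg, abs_mul, abs_pow, abs_neg, abs_one, one_pow, one_mul,
        abs_of_pos hq0]
    have hnum : |hh N - hh (N+1)| ≤ 4 := by
      have b1 := hh_bound N
      have b2 := hh_bound (N+1)
      calc |hh N - hh (N+1)| ≤ |hh N| + |hh (N+1)| := abs_sub _ _
        _ ≤ 4 := by linarith
    calc |hh N - hh (N+1)| / qq N ≤ 4 / (2:ℝ)^N :=
          div_le_div₀ (by norm_num) hnum h2N hqg
      _ = 4 * (1/2:ℝ)^N := by rw [div_pow, one_pow]; ring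
  · have h := (tendsto_pow_atTop_nhds_zero_of_lt_one
      (by norm_num : (0:ℝ) ≤ 1/2) (by norm_num : (1/2:ℝ) < 1)).const_mul (4:ℝ)
    simpa using h
end

section
/- Specializing the Gamma continued fraction to α = 1, ξ = 1: K_{n=1}^∞ ((n+1)(1−2n))/(3n+3) = −2 + Γ(3/2)·Γ(1/2)/Γ(1) = −2 + π/2; i.e., the continued fraction with b_n = (n+1)(1−2n) and a_n = 3n+3 converges to π/2 − 2. -/
open Real Filter

namespace CFAux

noncomputable def bb : ℕ → ℝ := fun n => ((n : ℝ) + 1) * (1 - 2 * n)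
noncomputable def aa : ℕ → ℝ := fun n => 3 * (n : ℝ) + 3

noncomputable def cfx (N : ℕ) (x : ℝ) : ℝ :=
  (List.range N).foldr (fun i acc => bb (i + 1) / (aa (i + 1) + acc)) x

lemma cf_eq_cfx (N : ℕ) : cf bb aa N = cfx N 0 := rfl

lemma cfx_succ (N : ℕ) (x : ℝ) :
    cfx (N + 1) x = cfx N (bb (N + 1) / (aa (N + 1) + x)) := by
  unfold cfx
  rw [List.range_succ, List.foldr_append]
  rfl

/-- `D n = (2n+1)!!` -/
noncomputable def D : ℕ → ℝ
  | 0 => 1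
  | n + 1 => (2 * n + 3) * D n

lemma D_pos : ∀ n, 0 < D n
  | 0 => one_pos
  | n + 1 => by
      have := D_pos n
      unfold D
      positivity

noncomputable def s (m : ℕ) : ℝ := (m.factorial : ℝ) / D (m + 1)

noncomputable def sig (n : ℕ) : ℝ := ∑ m ∈ Finset.range n, s m

noncomputable def q (n : ℕ) : ℝ := ((n : ℝ) + 1) * D n

noncomputable def p (n : ℕ) : ℝ := -(q n) * sig n

lemma q_pos (n : ℕ) : 0 < q n := by
  unfold q
  have := D_pos n
  positivity

lemma D_succ (n : ℕ) : D (n + 1) = (2 * (n : ℝ) + 3) * D n := rfl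

lemma q_rec (n : ℕ) : q (n + 2) = aa (n + 2) * q (n + 1) + bb (n + 2) * q n := by
  unfold q aa bb
  rw [D_succ (n + 1), D_succ n]
  push_cast
  ring

lemma p_rec (n : ℕ) : p (n + 2) = aa (n + 2) * p (n + 1) + bb (n + 2) * p n := by
  unfold p
  have hrec := q_rec n
  have h1 : sig (n + 2) = sig (n + 1) + s (n + 1) := by
    unfold sig; rw [Finset.sum_range_succ]
  have h2 : sig (n + 1) = sig n + s n := by
    unfold sig; rw [Finset.sum_range_succ]
  -- key cancellation : q (n+2) * s (n+1) + bb (n+2) * q n * s n = 0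
  have hkey : q (n + 2) * s (n + 1) + bb (n + 2) * q n * s n = 0 := by
    unfold q s bb
    have hD1 : D (n + 1) ≠ 0 := ne_of_gt (D_pos (n + 1))
    have hD2 : D (n + 2) ≠ 0 := ne_of_gt (D_pos (n + 2))
    have hfac : ((n + 1).factorial : ℝ) = ((n : ℝ) + 1) * n.factorial := by
      rw [Nat.factorial_succ]; push_cast; ring
    have h3 : (2 * (n : ℝ) + 3) ≠ 0 := by positivity
    have h5 : (2 * ((n : ℝ) + 1) + 3) ≠ 0 := by positivity
    have hDn : D n ≠ 0 := ne_of_gt (D_pos n)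
    rw [hfac, D_succ (n + 1), D_succ n]
    push_cast
    field_simp
    ring
  rw [h1, h2]
  linear_combination (-(sig n + s n)) * hrec - hkey


lemma qden_pos (N : ℕ) {x : ℝ} (hx : -((N : ℝ) + 2) < x) : 0 < q (N + 1) + q N * x := by
  unfold q
  rw [D_succ]
  have hD := D_pos N
  push_cast
  have hN : (0:ℝ) ≤ (N : ℝ) := Nat.cast_nonneg N
  nlinarith [mul_pos hD (show (0:ℝ) < x + ((N:ℝ) + 2) by linarith),
    mul_nonneg hN (le_of_lt hD), mul_nonneg (mul_nonneg hN hN) (le_of_lt hD),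
    mul_nonneg (mul_nonneg hN (le_of_lt hD)) (show (0:ℝ) ≤ x + ((N:ℝ)+2) by linarith)]

lemma key : ∀ N : ℕ, ∀ x : ℝ, -((N : ℝ) + 2) < x → x ≤ 0 →
    cfx (N + 1) x = (p (N + 1) + p N * x) / (q (N + 1) + q N * x) := by
  intro N
  induction N with
  | zero =>
    intro x h1 h2
    have e : cfx 1 x = bb 1 / (aa 1 + x) := rfl
    rw [e]
    norm_num [bb, aa, p, q, sig, s, D, Finset.sum_range_one]
  | succ N ih =>
    intro x h1 h2
    rw [cfx_succ]
    push_cast at h1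
    have ha : 0 < aa (N + 2) + x := by
      unfold aa; push_cast; nlinarith [Nat.cast_nonneg (α := ℝ) N]
    have hbval : bb (N + 2) = ((N : ℝ) + 3) * (-(2 * N + 3)) := by
      unfold bb; push_cast; ring
    set y := bb (N + 2) / (aa (N + 2) + x) with hy
    have hyx : y * (aa (N + 2) + x) = bb (N + 2) :=
      div_mul_cancel₀ _ (ne_of_gt ha)
    have hb_neg : bb (N + 2) < 0 := by
      rw [hbval]
      have : (0:ℝ) ≤ (N:ℝ) := Nat.cast_nonneg N
      nlinarith
    have hy_le : y ≤ 0 := div_nonpos_of_nonpos_of_nonneg (le_of_lt hb_neg) (le_of_lt ha)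
    have hy_gt : -((N : ℝ) + 2) < y := by
      rw [hy, lt_div_iff₀ ha, hbval]
      have hN : (0:ℝ) ≤ (N:ℝ) := Nat.cast_nonneg N
      unfold aa; push_cast
      nlinarith [mul_pos (show (0:ℝ) < (N:ℝ) + 2 by linarith)
        (show (0:ℝ) < x + ((N:ℝ) + 3) by linarith)]
    rw [ih y hy_gt hy_le]
    have hd1 : 0 < q (N + 1) + q N * y := qden_pos N hy_gt
    have hd2 : 0 < q (N + 2) + q (N + 1) * x := qden_pos (N + 1) (by push_cast; linarith)
    rw [div_eq_div_iff (ne_of_gt hd1) (ne_of_gt hd2), q_rec, p_rec]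
    linear_combination (p N * q (N + 1) - p (N + 1) * q N) * hyx

lemma cf_eq_sig (N : ℕ) : cf bb aa N = -sig N := by
  cases N with
  | zero => simp [cf, sig, cf_eq_cfx]
  | succ N =>
    rw [cf_eq_cfx, key N 0 (neg_lt_zero.mpr (by positivity)) le_rfl]
    rw [mul_zero, add_zero, mul_zero, add_zero]
    unfold p
    field_simp [ne_of_gt (q_pos (N + 1))]

lemma s_nonneg (m : ℕ) : 0 ≤ s m := by
  unfold s
  have := D_pos (m + 1)
  positivity

lemma s_succ (m : ℕ) : s (m + 1) = s m * (((m : ℝ) + 1) / (2 * m + 5)) := by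
  unfold s
  rw [D_succ (m + 1), Nat.factorial_succ]
  have h1 : D (m + 1) ≠ 0 := ne_of_gt (D_pos (m + 1))
  have h2 : (2 * ((m:ℝ) + 1) + 3) ≠ 0 := by positivity
  push_cast
  field_simp
  ring

lemma s_le (m : ℕ) : s m ≤ (1/3) * (1/2) ^ m := by
  induction m with
  | zero =>
    unfold s
    rw [D_succ]
    norm_num [D, Nat.factorial]
  | succ m ih =>
    rw [s_succ]
    have hfrac : ((m : ℝ) + 1) / (2 * m + 5) ≤ 1 / 2 := by
      rw [div_le_div_iff₀ (by positivity) (by norm_num)]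
      have : (0:ℝ) ≤ (m:ℝ) := Nat.cast_nonneg m
      linarith
    have hs := s_nonneg m
    calc s m * (((m : ℝ) + 1) / (2 * m + 5)) ≤ ((1/3) * (1/2)^m) * (1/2) := by
          apply mul_le_mul ih hfrac (by positivity) (by positivity)
      _ = (1/3) * (1/2)^(m+1) := by ring

lemma summable_s : Summable s := by
  apply Summable.of_nonneg_of_le s_nonneg s_le
  exact ((summable_geometric_of_lt_one (by norm_num) (by norm_num)).mul_left _)

lemma D_fac (n : ℕ) : D n * 2 ^ n * (n.factorial : ℝ) = ((2 * n + 1).factorial : ℝ) := by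
  induction n with
  | zero => simp [D]
  | succ n ih =>
    have h1 : 2 * (n + 1) + 1 = (2 * n + 1) + 1 + 1 := by ring
    rw [D_succ, h1, Nat.factorial_succ, Nat.factorial_succ, Nat.factorial_succ]
    rw [pow_succ]
    push_cast
    push_cast at ih
    linear_combination ((2*(n:ℝ)+3)*(2*(n:ℝ)+2)) * ih

lemma beta_real (m : ℕ) :
    ∫ x in (0:ℝ)..1, (x * (1 - x)) ^ (m + 1)
      = ((m+1).factorial : ℝ) ^ 2 / ((2*m+3).factorial : ℝ) := by
  have hu : 0 < Complex.re (((m + 1 : ℕ) : ℂ) + 1) := by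
    simp only [Complex.add_re, Complex.natCast_re, Complex.one_re]
    positivity
  have h := Complex.Gamma_mul_Gamma_eq_betaIntegral hu hu
  rw [show ((m + 1 : ℕ) : ℂ) + 1 + (((m + 1 : ℕ) : ℂ) + 1) = ((2*m+3 : ℕ) : ℂ) + 1 by
    push_cast; ring] at h
  rw [Complex.Gamma_nat_eq_factorial, Complex.Gamma_nat_eq_factorial] at h
  have hbeta : Complex.betaIntegral (((m + 1 : ℕ) : ℂ) + 1) (((m + 1 : ℕ) : ℂ) + 1)
      = ((∫ x in (0:ℝ)..1, (x * (1 - x)) ^ (m + 1) : ℝ) : ℂ) := by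
    rw [Complex.betaIntegral, ← intervalIntegral.integral_ofReal]
    apply intervalIntegral.integral_congr
    intro x _
    simp only [add_sub_cancel_right, Complex.cpow_natCast]
    rw [← mul_pow]
    push_cast
    ring
  rw [hbeta] at h
  have hfac : ((2*m+3).factorial : ℂ) ≠ 0 :=
    Nat.cast_ne_zero.mpr (Nat.factorial_ne_zero _)
  have hc : ((∫ x in (0:ℝ)..1, (x * (1 - x)) ^ (m + 1) : ℝ) : ℂ)
      = ((m+1).factorial : ℂ) ^ 2 / ((2*m+3).factorial : ℂ) := by
    field_simp at h ⊢
    linear_combination -h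
  apply Complex.ofReal_injective
  rw [hc]
  push_cast
  ring

lemma s_int (m : ℕ) :
    s m = ∫ x in (0:ℝ)..1, (2 * x * (1 - x)) ^ (m + 1) / ((m : ℝ) + 1) := by
  have he : ∀ x : ℝ, (2 * x * (1 - x)) ^ (m + 1) / ((m : ℝ) + 1)
      = (2 ^ (m+1) / ((m : ℝ) + 1)) * (x * (1 - x)) ^ (m + 1) := by
    intro x
    rw [show (2 * x * (1 - x)) = 2 * (x * (1 - x)) by ring, mul_pow]
    ring
  simp_rw [he]
  rw [intervalIntegral.integral_const_mul, beta_real]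
  unfold s
  have h1 : D (m + 1) ≠ 0 := ne_of_gt (D_pos (m + 1))
  have h2 : ((m:ℝ) + 1) ≠ 0 := by positivity
  have h3 : ((2*m+3).factorial : ℝ) ≠ 0 := Nat.cast_ne_zero.mpr (Nat.factorial_ne_zero _)
  have hDf := D_fac (m + 1)
  rw [show 2 * (m + 1) + 1 = 2 * m + 3 by ring] at hDf
  have hfac : ((m + 1).factorial : ℝ) = ((m:ℝ) + 1) * (m.factorial : ℝ) := by
    rw [Nat.factorial_succ]; push_cast; ring
  field_simp
  push_cast at hDf ⊢
  nlinarith [hDf, hfac, sq_nonneg ((m:ℝ))]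

lemma q_poly_pos (x : ℝ) : 0 < 2 * x ^ 2 - 2 * x + 1 := by nlinarith [sq_nonneg (2 * x - 1)]

noncomputable def H (x : ℝ) : ℝ :=
  (1 / 2 - x) * Real.log (2 * x ^ 2 - 2 * x + 1) + 2 * x - Real.arctan (2 * x - 1)

lemma H_deriv (x : ℝ) : HasDerivAt H (-Real.log (2 * x ^ 2 - 2 * x + 1)) x := by
  have hq := q_poly_pos x
  have h1 : HasDerivAt (fun x : ℝ => 2 * x ^ 2 - 2 * x + 1) (4 * x - 2) x := by
    have := (((hasDerivAt_pow 2 x).const_mul 2).sub ((hasDerivAt_id x).const_mul 2)).add_const 1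
    refine this.congr_deriv ?_
    simp
    ring
  have h2 : HasDerivAt (fun x : ℝ => Real.log (2 * x ^ 2 - 2 * x + 1))
      ((4 * x - 2) / (2 * x ^ 2 - 2 * x + 1)) x := h1.log (ne_of_gt hq)
  have h3 : HasDerivAt (fun x : ℝ => 1 / 2 - x) (-1) x := by
    simpa using (hasDerivAt_id x).const_sub (1/2 : ℝ)
  have h4 : HasDerivAt (fun x : ℝ => 2 * x) 2 x := by
    simpa using (hasDerivAt_id x).const_mul (2:ℝ)
  have h5i : HasDerivAt (fun x : ℝ => 2 * x - 1) 2 x := by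
    simpa using h4.sub_const 1
  have h5 : HasDerivAt (fun x : ℝ => Real.arctan (2 * x - 1))
      ((1 / (1 + (2 * x - 1) ^ 2)) * 2) x :=
    by have := (Real.hasDerivAt_arctan (2 * x - 1)).comp x h5i; exact this
  have htot := ((h3.mul h2).add h4).sub h5
  refine htot.congr_deriv ?_
  have hden : (1 + (2 * x - 1) ^ 2) = 2 * (2 * x ^ 2 - 2 * x + 1) := by ring
  rw [hden]
  field_simp
  have hu : (1 - x * 2 + x ^ 2 * 2) ≠ 0 := ne_of_gt (by linarith [hq])
  linear_combination (-4:ℝ) * mul_inv_cancel₀ hu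

lemma integral_log_q :
    ∫ x in (0:ℝ)..1, -Real.log (2 * x ^ 2 - 2 * x + 1) = 2 - Real.pi / 2 := by
  have hcont : Continuous (fun x : ℝ => -Real.log (2 * x ^ 2 - 2 * x + 1)) := by
    rw [continuous_iff_continuousAt]
    intro x
    have hinner : Continuous fun x : ℝ => 2 * x ^ 2 - 2 * x + 1 := by continuity
    exact (hinner.continuousAt.log (ne_of_gt (q_poly_pos x))).neg
  rw [intervalIntegral.integral_eq_sub_of_hasDerivAt (fun x _ => H_deriv x)
    (hcont.intervalIntegrable 0 1)]
  unfold H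
  norm_num
  ring

open MeasureTheory in
lemma hasSum_s : HasSum s (2 - Real.pi / 2) := by
  set μ := volume.restrict (Set.Ioc (0:ℝ) 1) with hμ
  set F : ℕ → ℝ → ℝ := fun m x => (2 * x * (1 - x)) ^ (m + 1) / ((m : ℝ) + 1) with hFdef
  have hFcont : ∀ m, Continuous (F m) := by
    intro m
    exact (((continuous_const.mul continuous_id).mul
      (continuous_const.sub continuous_id)).pow _).div_const _
  have hF_int : ∀ m, Integrable (F m) μ := fun m =>
    ((hFcont m).continuousOn.integrableOn_Icc).mono_set Set.Ioc_subset_Icc_self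
  have hFeq : ∀ m, ∫ x, F m x ∂μ = s m := by
    intro m
    rw [s_int m, intervalIntegral.integral_of_le zero_le_one]
  have hFnonneg : ∀ m, ∀ x ∈ Set.Ioc (0:ℝ) 1, 0 ≤ F m x := by
    intro m x hx
    apply div_nonneg (pow_nonneg (by nlinarith [hx.1, hx.2]) _) (by positivity)
  have hnorm : ∀ m, (∫ x, ‖F m x‖ ∂μ) = s m := by
    intro m
    rw [← hFeq m]
    exact integral_congr_ae ((ae_restrict_iff' measurableSet_Ioc).mpr
      (Filter.Eventually.of_forall fun x hx => Real.norm_of_nonneg (hFnonneg m x hx)))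
  have hsum : Summable fun m => ∫ x, ‖F m x‖ ∂μ :=
    summable_s.congr fun m => (hnorm m).symm
  have swap := hasSum_integral_of_summable_integral_norm hF_int hsum
  have hts : Set.EqOn (fun x => ∑' m, F m x)
      (fun x => -Real.log (2 * x ^ 2 - 2 * x + 1)) (Set.Ioc (0:ℝ) 1) := by
    intro x hx
    have habs : |2 * x * (1 - x)| < 1 := by
      rw [abs_lt]; constructor <;> nlinarith [hx.1, hx.2]
    have := (Real.hasSum_pow_div_log_of_abs_lt_one habs).tsum_eq
    simp only
    rw [this, show (1 - 2 * x * (1 - x)) = 2 * x ^ 2 - 2 * x + 1 by ring]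
  have hRHS : ∫ x, (∑' m, F m x) ∂μ = 2 - Real.pi / 2 := by
    rw [hμ, setIntegral_congr_fun measurableSet_Ioc hts,
      ← intervalIntegral.integral_of_le zero_le_one]
    exact integral_log_q
  rw [hRHS] at swap
  exact (funext hFeq : (fun m => ∫ x, F m x ∂μ) = s) ▸ swap

end CFAux


theorem cf_gamma_special :
    Tendsto
      (cf (fun n => ((n : ℝ) + 1) * (1 - 2 * n)) (fun n => 3 * (n : ℝ) + 3)) atTop
      (nhds (Real.pi / 2 - 2)) := by
  have h := CFAux.hasSum_s.tendsto_sum_nat.neg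
  rw [show -(2 - Real.pi / 2) = Real.pi / 2 - 2 by ring] at h
  exact h.congr fun N => (CFAux.cf_eq_sig N).symm
end
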